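/- Let C be a class of topological dynamical systems closed under subsystems and finite products. If S ⊆ ℕ is a weak interpolation set of order 2 for C, then S is a weak interpolation set of order 2^m for C for every m ∈ ℕ. (Hence weak interpolation of order 2 implies weak interpolation of all orders for C.) -/

import Mathlib

/-- A topological dynamical system: a compact metric space with a continuous self-map. -/
structure TDS where
  X : Type
  ms : MetricSpace X
  cs : CompactSpace X
  T : X → X
  cont : Continuous T

attribute [instance] TDS.ms TDS.cs

/-- The product of two topological dynamical systems. -/
noncomputable def TDS.prod (A B : TDS) : TDS where
  X := A.X × B.X
  ms := inferInstance
  cs := inferInstance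
  T := fun p => (A.T p.1, B.T p.2)
  cont := (A.cont.comp continuous_fst).prodMk (B.cont.comp continuous_snd)

/-- The subsystem of a topological dynamical system given by a closed invariant subset. -/
noncomputable def TDS.sub (A : TDS) (Y : Set A.X) (hY : IsClosed Y)
    (hinv : Set.MapsTo A.T Y Y) : TDS where
  X := Y
  ms := inferInstance
  cs := isCompact_iff_compactSpace.mp hY.isCompact
  T := hinv.restrict A.T Y Y
  cont := A.cont.restrict hinv

/-- `S` is a weak interpolation set of order `k` for the class `C`: every `f : S → {0,…,k−1}`
extends to `n ↦ F(Tⁿx)` for some system in `C`, transitive point `x` and continuous `F`. -/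
def WeakInterp (C : TDS → Prop) (k : ℕ) (S : Set ℕ) : Prop :=
  ∀ f : ℕ → ℕ, (∀ n ∈ S, f n < k) →
    ∃ A : TDS, C A ∧ ∃ (x : A.X) (F : A.X → ℂ),
      Dense (Set.range fun n : ℕ => A.T^[n] x) ∧ Continuous F ∧
      ∀ n ∈ S, F (A.T^[n] x) = (f n : ℂ)

lemma iter_prod (A B : TDS) (p : (A.prod B).X) (n : ℕ) :
    (A.prod B).T^[n] p = (A.T^[n] p.1, B.T^[n] p.2) := by
  induction n generalizing p with
  | zero => rfl
  | succ n ih =>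
    rw [Function.iterate_succ_apply, Function.iterate_succ_apply,
      Function.iterate_succ_apply, ih]
    rfl

lemma iter_restrict {α : Type} (T : α → α) (Y : Set α) (hinv : Set.MapsTo T Y Y)
    (x : Y) (n : ℕ) : ((hinv.restrict T Y Y)^[n] x : α) = T^[n] (x : α) := by
  induction n generalizing x with
  | zero => rfl
  | succ n ih =>
    rw [Function.iterate_succ_apply, Function.iterate_succ_apply, ih]
    rfl
theorem stmt18 (C : TDS → Prop)
    (Csub : ∀ (A : TDS), C A → ∀ (Y : Set A.X) (hY : IsClosed Y)
      (hinv : Set.MapsTo A.T Y Y), C (A.sub Y hY hinv))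
    (Cprod : ∀ A B : TDS, C A → C B → C (A.prod B))
    (S : Set ℕ) (h2 : WeakInterp C 2 S) :
    ∀ m : ℕ, WeakInterp C (2 ^ m) S := by
  intro m
  induction m with
  | zero =>
    intro f hf
    obtain ⟨A, hA, x, F, hdense, hF, hint⟩ := h2 (fun _ => 0) (by intro n _; norm_num)
    exact ⟨A, hA, x, F, hdense, hF, fun n hn => by
      have : f n = 0 := by have := hf n hn; omega
      rw [this]; simpa using hint n hn⟩
  | succ m ih =>
    intro f hf
    obtain ⟨A, hA, x, F, hdx, hFc, hFi⟩ := h2 (fun n => f n % 2)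
      (by intro n _; show f n % 2 < 2; omega)
    obtain ⟨B, hB, y, G, hdy, hGc, hGi⟩ := ih (fun n => f n / 2)
      (by intro n hn; show f n / 2 < 2 ^ m
          have h1 := hf n hn; rw [pow_succ] at h1; omega)
    set P := A.prod B with hP
    set O : Set P.X := Set.range fun n : ℕ => P.T^[n] (x, y) with hO
    set Y : Set P.X := closure O with hYdef
    have hY : IsClosed Y := isClosed_closure
    have hOY : O ⊆ Y := subset_closure
    have hinv : Set.MapsTo P.T Y Y := by
      intro p hp
      have h1 : P.T p ∈ closure (P.T '' O) := image_closure_subset_closure_image P.cont ⟨p, hp, rfl⟩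
      refine closure_mono ?_ h1
      rintro q ⟨r, ⟨n, rfl⟩, rfl⟩
      exact ⟨n + 1, Function.iterate_succ_apply' _ _ _⟩
    let F' : A.X × B.X → ℂ := fun p => F p.1 + 2 * G p.2
    have hF'c : Continuous F' :=
      (hFc.comp continuous_fst).add (continuous_const.mul (hGc.comp continuous_snd))
    set Q := P.sub Y hY hinv with hQ
    let x₀ : Q.X := ⟨(x, y), hOY ⟨0, rfl⟩⟩
    have key : ∀ n : ℕ, Q.T^[n] x₀ = (⟨P.T^[n] (x, y), hOY ⟨n, rfl⟩⟩ : ↥Y) := by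
      intro n
      apply Subtype.ext
      exact iter_restrict P.T Y hinv x₀ n
    refine ⟨Q, Csub P (Cprod A B hA hB) Y hY hinv, x₀,
      (show Q.X → ℂ from fun p : ↥Y => F' p.val), ?_, ?_, ?_⟩
    · intro z
      refine (closure_subtype (p := fun a => a ∈ Y) (x := (z : ↥Y))).mpr ?_
      have himg : (Subtype.val '' Set.range fun n : ℕ => Q.T^[n] x₀) = O := by
        ext q
        simp only [Set.mem_image, Set.mem_range, hO, key]
        constructor
        · rintro ⟨w, ⟨n, rfl⟩, rfl⟩; exact ⟨n, rfl⟩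
        · rintro ⟨n, rfl⟩; exact ⟨_, ⟨n, rfl⟩, rfl⟩
      refine (congrArg (fun s => @Subtype.val P.X (fun a => a ∈ Y) z ∈ closure s) himg).mpr ?_
      exact z.2
    · exact hF'c.comp continuous_subtype_val
    · intro n hn
      rw [key n]
      show F' (P.T^[n] (x, y)) = (f n : ℂ)
      rw [show P.T^[n] (x, y) = (A.T^[n] x, B.T^[n] y) from iter_prod A B (x, y) n]
      show F (A.T^[n] x) + 2 * G (B.T^[n] y) = (f n : ℂ)
      rw [hFi n hn, hGi n hn]
      have hc : ((f n % 2 : ℕ) : ℂ) + 2 * ((f n / 2 : ℕ) : ℂ)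
          = ((f n % 2 + 2 * (f n / 2) : ℕ) : ℂ) := by push_cast; ring
      rw [hc]
      congr 1
      omega
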